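/- Let A be a finite-dimensional algebra over an algebraically closed field K such that the map λ ↦ λ' is an involution on Λ₀. Then the endomorphism algebra B = End_A(⊕_{λ∈Λ₀} P^λ) of the basic projective-injective module, equipped with the canonical linear form tr attached to any appropriate basis (tr takes value 1 on each θ_λ and 0 on all other basis elements), has non-degenerate associated bilinear form (f,g) ↦ tr(fg). In particular, B is a Frobenius algebra over K. -/

import Mathlib

/-- The socle of a module: the largest semisimple submodule. -/
def Socle (A M : Type) [Ring A] [AddCommGroup M] [Module A M] : Submodule A M :=
  ⨆ (p : Submodule A M) (_ : IsSimpleModule A ↥p), p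

/-- The radical of a module: the intersection of all maximal submodules. -/
def Rad (A M : Type) [Ring A] [AddCommGroup M] [Module A M] : Submodule A M :=
  sInf {p : Submodule A M | IsCoatom p}

/-- The canonical embedding of `Hom_A(P^λ, P^μ)` into `End_A(⊕ P^λ)`. -/
noncomputable def emb (A : Type) [Ring A] (ι : Type) [DecidableEq ι]
    (P : ι → Type) [∀ i, AddCommGroup (P i)] [∀ i, Module A (P i)]
    (l m : ι) (f : P l →ₗ[A] P m) : Module.End A (DirectSum ι P) :=
  (DirectSum.lof A ι P m).comp (f.comp (DirectSum.component A ι P l))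

section aux
variable {R : Type} [Ring R] {ι : Type} [DecidableEq ι]
  {P : ι → Type} [∀ i, AddCommGroup (P i)] [∀ i, Module R (P i)]

/-- projection onto a block -/
noncomputable def pib (u v : ι) (x : Module.End R (DirectSum ι P)) : P u →ₗ[R] P v :=
  (DirectSum.component R ι P v).comp (x.comp (DirectSum.lof R ι P u))

lemma pib_emb_self (u v : ι) (f : P u →ₗ[R] P v) : pib u v (emb R ι P u v f) = f := by
  ext p; simp [pib, emb, DirectSum.component.of]

lemma pib_emb_ne {u v u' v' : ι} (h : u ≠ u' ∨ v ≠ v') (f : P u' →ₗ[R] P v') :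
    pib u v (emb R ι P u' v' f) = 0 := by
  ext p
  rcases h with h | h
  · simp [pib, emb, DirectSum.component.of, h, Ne.symm h]
  · simp [pib, emb, DirectSum.component.of, h, Ne.symm h]

lemma emb_zero (u v : ι) : emb R ι P u v 0 = 0 := by
  ext p; simp [emb]

lemma emb_mul_emb (u v u' : ι) (f : P u →ₗ[R] P v) (g : P u' →ₗ[R] P u) :
    emb R ι P u v f * emb R ι P u' u g = emb R ι P u' v (f ∘ₗ g) := by
  ext p; simp [emb, Module.End.mul_eq_comp, DirectSum.component.of]

lemma emb_mul_emb_ne {u v u' v' : ι} (h : v' ≠ u) (f : P u →ₗ[R] P v) (g : P u' →ₗ[R] P v') :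
    emb R ι P u v f * emb R ι P u' v' g = 0 := by
  ext p; simp [emb, Module.End.mul_eq_comp, DirectSum.component.of, h, Ne.symm h]

lemma eq_zero_of_pib (x : Module.End R (DirectSum ι P)) (h : ∀ u v, pib u v x = 0) :
    x = 0 := by
  refine DirectSum.linearMap_ext R fun u => ?_
  ext1 p
  refine DirectSum.ext_component R (M := P) fun v => ?_
  have := congrArg (fun f => f p) (h u v)
  simpa [pib] using this

lemma pib_add (u v : ι) (x y : Module.End R (DirectSum ι P)) :
    pib u v (x + y) = pib u v x + pib u v y := by
  ext p; simp [pib]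

lemma pib_zero (u v : ι) : pib u v (0 : Module.End R (DirectSum ι P)) = 0 := by
  ext p; simp [pib]

end aux

section aux2
variable {R : Type} [Ring R] {ι : Type} [DecidableEq ι]
  {P : ι → Type} [∀ i, AddCommGroup (P i)] [∀ i, Module R (P i)]
  {K : Type} [CommSemiring K] [Algebra K R]
  [∀ i, Module K (P i)] [∀ i, IsScalarTower K R (P i)] [∀ i, SMulCommClass R K (P i)]

lemma pib_smul (u v : ι) (c : K) (x : Module.End R (DirectSum ι P)) :
    pib u v (c • x) = c • pib u v x := by
  ext p; simp [pib, LinearMap.map_smul_of_tower]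

lemma emb_smul (u v : ι) (c : K) (f : P u →ₗ[R] P v) :
    emb R ι P u v (c • f) = c • emb R ι P u v f := by
  ext p; simp [emb, LinearMap.map_smul_of_tower]

lemma emb_add (u v : ι) (f g : P u →ₗ[R] P v) :
    emb R ι P u v (f + g) = emb R ι P u v f + emb R ι P u v g := by
  ext p; simp [emb]

lemma mul_smul_right (y : Module.End R (DirectSum ι P)) (c : K)
    (x : Module.End R (DirectSum ι P)) : y * (c • x) = c • (y * x) := by
  ext p; simp [Module.End.mul_eq_comp, LinearMap.map_smul_of_tower]

lemma comp_smulK {M N O : Type} [AddCommGroup M] [AddCommGroup N] [AddCommGroup O]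
    [Module R M] [Module R N] [Module R O] [Module K N] [Module K O]
    [IsScalarTower K R N] [IsScalarTower K R O]
    (g : N →ₗ[R] O) (c : K) (f : M →ₗ[R] N) : g ∘ₗ (c • f) = c • (g ∘ₗ f) := by
  ext p; simp [LinearMap.map_smul_of_tower]

end aux2

section core
variable {K : Type} [Field K] {R : Type} [Ring R] [Algebra K R]
  {S : Type} [DecidableEq S] {Q : S → Type}
  [∀ s, AddCommGroup (Q s)] [∀ s, Module R (Q s)] [∀ s, Module K (Q s)]
  [∀ s, IsScalarTower K R (Q s)] [∀ s, SMulCommClass R K (Q s)]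

theorem core (pr : S → S) (hprinv : ∀ s, pr (pr s) = s)
    (θ : ∀ s, Q s →ₗ[R] Q (pr s))
    (ι : Type) (b : Module.Basis ι K (Module.End R (DirectSum S Q)))
    (hblock : ∀ i, ∃ s t f, b i = emb R S Q s t f)
    (hθin : ∀ s, ∃ i, b i = emb R S Q s (pr s) (θ s))
    (tr : Module.End R (DirectSum S Q) →ₗ[K] K)
    (htr1 : ∀ i, (∃ s, b i = emb R S Q s (pr s) (θ s)) → tr (b i) = 1)
    (htr0 : ∀ i, (¬ ∃ s, b i = emb R S Q s (pr s) (θ s)) → tr (b i) = 0)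
    (hfacL : ∀ s t (h : Q s →ₗ[R] Q t), h ≠ 0 → ∃ g : Q t →ₗ[R] Q (pr s), g ∘ₗ h = θ s)
    (hfacR : ∀ s u (h : Q s →ₗ[R] Q (pr u)), h ≠ 0 → ∃ g : Q u →ₗ[R] Q s, h ∘ₗ g = θ u)
    (x : Module.End R (DirectSum S Q)) (hx : x ≠ 0) :
    (∃ y, tr (x * y) ≠ 0) ∧ (∃ y, tr (y * x) ≠ 0) := by
  classical
  -- tr vanishes on all off-`θ` blocks
  have hET : ∀ u v (k : Q u →ₗ[R] Q v), v ≠ pr u → tr (emb R S Q u v k) = 0 := by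
    intro u v k hv
    have main : ∀ z : Module.End R (DirectSum S Q), tr (emb R S Q u v (pib u v z)) = 0 := by
      intro z
      have hz : z ∈ Submodule.span K (Set.range b) := by rw [b.span_eq]; trivial
      induction hz using Submodule.span_induction with
      | mem z hz =>
        obtain ⟨i, rfl⟩ := hz
        obtain ⟨s', t', f', hf'⟩ := hblock i
        by_cases hs : s' = u
        · subst hs
          by_cases ht : t' = v
          · subst ht
            rw [hf', pib_emb_self, ← hf']
            refine htr0 i ?_
            rintro ⟨s0, hs0⟩
            have hf'0 : f' ≠ 0 := by
              intro h0
              rw [h0, emb_zero] at hf'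
              exact b.ne_zero i hf'
            have heq := hf'.symm.trans hs0
            by_cases hus : s' = s0
            · subst hus
              by_cases hvs : t' = pr s'
              · exact hv hvs
              · have := congrArg (pib s' t') heq
                rw [pib_emb_self, pib_emb_ne (Or.inr hvs)] at this
                exact hf'0 this
            · have := congrArg (pib s' t') heq
              rw [pib_emb_self, pib_emb_ne (Or.inl hus)] at this
              exact hf'0 this
          · rw [hf', pib_emb_ne (Or.inr fun hh => ht hh.symm), emb_zero, map_zero]
        · rw [hf', pib_emb_ne (Or.inl fun hh => hs hh.symm), emb_zero, map_zero]
      | zero => rw [pib_zero, emb_zero, map_zero]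
      | add a c _ _ iha ihc => rw [pib_add, emb_add, map_add, iha, ihc, add_zero]
      | smul c a _ iha => rw [pib_smul, emb_smul, map_smul, iha, smul_zero]
    have := main (emb R S Q u v k)
    rwa [pib_emb_self] at this
  have htrθ : ∀ s, tr (emb R S Q s (pr s) (θ s)) = 1 := by
    intro s
    obtain ⟨i, hi⟩ := hθin s
    rw [← hi]
    exact htr1 i ⟨s, hi⟩
  have hprne : ∀ {s s' : S}, s' ≠ s → pr s ≠ pr s' := by
    intro s s' hss hh
    have h1 := hprinv s'
    rw [← hh, hprinv s] at h1
    exact hss h1.symm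
  -- Claim A : left multiplication picks out one block
  have claimA : ∀ s t (g : Q t →ₗ[R] Q (pr s)) (z : Module.End R (DirectSum S Q)),
      tr (emb R S Q t (pr s) g * z) = tr (emb R S Q s (pr s) (g ∘ₗ pib s t z)) := by
    intro s t g z
    have hz : z ∈ Submodule.span K (Set.range b) := by rw [b.span_eq]; trivial
    induction hz using Submodule.span_induction with
    | mem z hz =>
      obtain ⟨i, rfl⟩ := hz
      obtain ⟨s', t', f', hf'⟩ := hblock i
      rw [hf']
      by_cases ht : t' = t
      · subst ht
        rw [emb_mul_emb]
        by_cases hs : s' = s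
        · subst hs; rw [pib_emb_self]
        · rw [pib_emb_ne (Or.inl fun hh => hs hh.symm), LinearMap.comp_zero, emb_zero,
            map_zero, hET s' (pr s) _ (hprne hs)]
      · rw [emb_mul_emb_ne ht, map_zero,
          pib_emb_ne (Or.inr fun hh => ht hh.symm), LinearMap.comp_zero, emb_zero, map_zero]
    | zero => rw [mul_zero, pib_zero, LinearMap.comp_zero, emb_zero]
    | add a c _ _ iha ihc =>
        rw [mul_add, map_add, iha, ihc, pib_add, LinearMap.comp_add, emb_add, map_add]
    | smul c a _ iha =>
        rw [mul_smul_right, map_smul, iha, pib_smul, comp_smulK, emb_smul, map_smul]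
  -- Claim B : right multiplication picks out one block
  have claimB : ∀ s u (g : Q u →ₗ[R] Q s) (z : Module.End R (DirectSum S Q)),
      tr (z * emb R S Q u s g) = tr (emb R S Q u (pr u) (pib s (pr u) z ∘ₗ g)) := by
    intro s u g z
    have hz : z ∈ Submodule.span K (Set.range b) := by rw [b.span_eq]; trivial
    induction hz using Submodule.span_induction with
    | mem z hz =>
      obtain ⟨i, rfl⟩ := hz
      obtain ⟨s', t', f', hf'⟩ := hblock i
      rw [hf']
      by_cases hs : s' = s
      · subst hs
        rw [emb_mul_emb]
        by_cases ht : t' = pr u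
        · subst ht; rw [pib_emb_self]
        · rw [hET u t' _ ht, pib_emb_ne (Or.inr fun hh => ht hh.symm), LinearMap.zero_comp,
            emb_zero, map_zero]
      · rw [emb_mul_emb_ne (fun hh => hs hh.symm), map_zero,
          pib_emb_ne (Or.inl fun hh => hs hh.symm), LinearMap.zero_comp, emb_zero, map_zero]
    | zero => rw [zero_mul, pib_zero, LinearMap.zero_comp, emb_zero]
    | add a c _ _ iha ihc =>
        rw [add_mul, map_add, iha, ihc, pib_add, LinearMap.add_comp, emb_add, map_add]
    | smul c a _ iha =>
        rw [smul_mul_assoc, map_smul, iha, pib_smul, LinearMap.smul_comp, emb_smul, map_smul]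
  obtain ⟨s, t, hst⟩ : ∃ s t, pib s t x ≠ 0 := by
    by_contra hc
    push_neg at hc
    exact hx (eq_zero_of_pib x fun u v => hc u v)
  obtain ⟨u, rfl⟩ : ∃ u, t = pr u := ⟨pr t, (hprinv t).symm⟩
  constructor
  · obtain ⟨g', hg'⟩ := hfacR s u (pib s (pr u) x) hst
    refine ⟨emb R S Q u s g', ?_⟩
    rw [claimB s u g' x, hg', htrθ u]
    exact one_ne_zero
  · obtain ⟨g, hg⟩ := hfacL s (pr u) (pib s (pr u) x) hst
    refine ⟨emb R S Q (pr u) (pr s) g, ?_⟩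
    rw [claimA s (pr u) g x, hg, htrθ s]
    exact one_ne_zero

end core

/-- With `λ ↦ λ'` an involution on `Λ₀`, the endomorphism algebra
`B = End_A(⊕_{λ∈Λ₀} P^λ)` equipped with the canonical form `tr` attached to an appropriate
basis (value `1` on each `θ_λ`, `0` on other basis elements) has non-degenerate associated
bilinear form `(f,g) ↦ tr (f * g)`; in particular `B` is a Frobenius algebra. -/
theorem stmt_2
    (K A : Type) [Field K] [IsAlgClosed K] [Ring A] [Algebra K A] [FiniteDimensional K A]
    (Lam : Type) [DecidableEq Lam] (L P : Lam → Type)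
    [∀ l, AddCommGroup (L l)] [∀ l, Module A (L l)] [∀ l, Module K (L l)]
    [∀ l, IsScalarTower K A (L l)] [∀ l, FiniteDimensional K (L l)]
    [∀ l, AddCommGroup (P l)] [∀ l, Module A (P l)] [∀ l, Module K (P l)]
    [∀ l, IsScalarTower K A (P l)] [∀ l, SMulCommClass A K (P l)]
    [∀ l, FiniteDimensional K (P l)]
    (hsimple : ∀ l, IsSimpleModule A (L l))
    (hdistinct : ∀ l m, Nonempty (L l ≃ₗ[A] L m) → l = m)
    (hproj : ∀ l, Module.Projective A (P l))
    (hcover : ∀ l, ∃ π : P l →ₗ[A] L l, Function.Surjective π ∧ LinearMap.ker π = Rad A (P l))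
    -- the map ' on Λ₀ = {l | P l injective}, an involution, with soc(P^λ) ≅ L^{λ'}
    (pr : ∀ s : {l : Lam // Module.Injective A (P l)}, {l : Lam // Module.Injective A (P l)})
    (hpr : ∀ s, Nonempty (↥(Socle A (P s.1)) ≃ₗ[A] L (pr s).1))
    (hprinv : ∀ s, pr (pr s) = s)
    -- the fixed maps θ_λ : P^λ → P^{λ'} with image soc(P^{λ'})
    (θ : ∀ s : {l : Lam // Module.Injective A (P l)}, P s.1 →ₗ[A] P (pr s).1)
    (hθ : ∀ s, LinearMap.range (θ s) = Socle A (P (pr s).1))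
    -- an appropriate basis of B = End_A(⊕_{λ ∈ Λ₀} P^λ)
    (ι : Type) (b : Module.Basis ι K (Module.End A
      (DirectSum {l : Lam // Module.Injective A (P l)} (fun s => P s.1))))
    (hblock : ∀ i : ι, ∃ s t : {l : Lam // Module.Injective A (P l)},
      ∃ f : P s.1 →ₗ[A] P t.1,
        b i = emb A {l : Lam // Module.Injective A (P l)} (fun s => P s.1) s t f)
    (hθin : ∀ s, ∃ i : ι,
      b i = emb A {l : Lam // Module.Injective A (P l)} (fun s => P s.1) s (pr s) (θ s))
    -- the canonical form tr attached to the basis b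
    (tr : Module.End A (DirectSum {l : Lam // Module.Injective A (P l)} (fun s => P s.1)) →ₗ[K] K)
    (htr1 : ∀ i : ι, (∃ s, b i =
        emb A {l : Lam // Module.Injective A (P l)} (fun s => P s.1) s (pr s) (θ s)) →
      tr (b i) = 1)
    (htr0 : ∀ i : ι, (¬ ∃ s, b i =
        emb A {l : Lam // Module.Injective A (P l)} (fun s => P s.1) s (pr s) (θ s)) →
      tr (b i) = 0) :
    ∀ x : Module.End A (DirectSum {l : Lam // Module.Injective A (P l)} (fun s => P s.1)),
      x ≠ 0 → (∃ y, tr (x * y) ≠ 0) ∧ (∃ y, tr (y * x) ≠ 0) := by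
  
  classical
  intro x hx
  have hart : ∀ l : Lam, IsArtinian A (P l) := fun l => isArtinian_of_tower K inferInstance
  have hnoe : ∀ l : Lam, IsNoetherian A (P l) := fun l => isNoetherian_of_tower K inferInstance
  have hsocsimple : ∀ m : {l : Lam // Module.Injective A (P l)},
      IsSimpleModule A ↥(Socle A (P m.1)) := by
    intro m
    obtain ⟨e⟩ := hpr m
    haveI := hsimple (pr m).1
    exact IsSimpleModule.congr e
  -- left factorization: any nonzero h : P s → P t admits g with g ∘ h = θ s
  have hfacL : ∀ (s t : {l : Lam // Module.Injective A (P l)}) (h : P s.1 →ₗ[A] P t.1),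
      h ≠ 0 → ∃ g : P t.1 →ₗ[A] P (pr s).1, g ∘ₗ h = θ s := by
    intro s t h hne
    haveI := hnoe s.1
    -- ker (θ s) is a coatom
    have hs5 : IsSimpleModule A ↥(LinearMap.range (θ s)) := by
      rw [hθ s]; exact hsocsimple (pr s)
    have hker1 : IsCoatom (LinearMap.ker (θ s)) := by
      haveI := hs5
      exact isSimpleModule_iff_isCoatom.mp (IsSimpleModule.congr (θ s).quotKerEquivRange)
    -- Rad is a coatom
    obtain ⟨πc, hπs, hπk⟩ := hcover s.1
    have hrad : IsCoatom (Rad A (P s.1)) := by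
      rw [← hπk]
      haveI := hsimple s.1
      exact isSimpleModule_iff_isCoatom.mp
        (IsSimpleModule.congr (πc.quotKerEquivOfSurjective hπs))
    have huniq : ∀ M' : Submodule A (P s.1), IsCoatom M' → M' = Rad A (P s.1) := by
      intro M' hM'
      have h1 : Rad A (P s.1) ≤ M' := sInf_le hM'
      rcases lt_or_eq_of_le h1 with h2 | h2
      · exact absurd (hrad.2 M' h2) hM'.1
      · exact h2.symm
    have hktop : LinearMap.ker h ≠ ⊤ := fun hk => hne (LinearMap.ker_eq_top.mp hk)
    haveI : IsCoatomic (Submodule A (P s.1)) :=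
      isCoatomic_of_orderTop_gt_wellFounded IsWellFounded.wf
    obtain ⟨M', hM', hle⟩ := (eq_top_or_exists_le_coatom (LinearMap.ker h)).resolve_left hktop
    have hkk : LinearMap.ker h ≤ LinearMap.ker (θ s) := by
      rw [huniq _ hker1]
      rw [huniq M' hM'] at hle
      exact hle
    set θ' := (LinearMap.ker h).liftQ (θ s) hkk with hθ'
    set h' := (LinearMap.ker h).liftQ h le_rfl with hh'
    have hinj : Function.Injective h' := by
      rw [← LinearMap.ker_eq_bot]
      exact Submodule.ker_liftQ_eq_bot _ _ _ le_rfl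
    obtain ⟨g, hg⟩ := (pr s).2.out h' hinj θ'
    refine ⟨g, ?_⟩
    ext p
    have := hg ((LinearMap.ker h).mkQ p)
    simpa [hθ', hh', Submodule.liftQ_apply] using this
  -- right factorization
  have hfacR : ∀ (s u : {l : Lam // Module.Injective A (P l)})
      (h : P s.1 →ₗ[A] P (pr u).1), h ≠ 0 → ∃ g : P u.1 →ₗ[A] P s.1, h ∘ₗ g = θ u := by
    intro s u h hne
    haveI := hart (pr u).1
    have hr0 : LinearMap.range h ≠ ⊥ := fun hr => hne (LinearMap.range_eq_bot.mp hr)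
    haveI : IsAtomic (Submodule A (P (pr u).1)) :=
      isAtomic_of_orderBot_wellFounded_lt IsWellFounded.wf
    obtain ⟨a, ha, hale⟩ := (eq_bot_or_exists_atom_le (LinearMap.range h)).resolve_left hr0
    have hsocatom : IsAtom (Socle A (P (pr u).1)) :=
      isSimpleModule_iff_isAtom.mp (hsocsimple (pr u))
    have hasoc : a ≤ Socle A (P (pr u).1) := by
      haveI : IsSimpleModule A ↥a := isSimpleModule_iff_isAtom.mpr ha
      exact le_iSup₂ (f := fun (p : Submodule A (P (pr u).1)) (_ : IsSimpleModule A ↥p) => p)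
        a ‹_›
    have haeq : a = Socle A (P (pr u).1) := by
      rcases lt_or_eq_of_le hasoc with h2 | h2
      · exact absurd (hsocatom.2 a h2) ha.1
      · exact h2
    have hle : Socle A (P (pr u).1) ≤ LinearMap.range h := haeq ▸ hale
    haveI := hproj u.1
    have hmem : ∀ c, θ u c ∈ LinearMap.range h := fun c =>
      hle (by rw [← hθ u]; exact LinearMap.mem_range_self _ c)
    obtain ⟨g, hg⟩ := Module.projective_lifting_property h.rangeRestrict
      (LinearMap.codRestrict (LinearMap.range h) (θ u) hmem) h.surjective_rangeRestrict
    refine ⟨g, ?_⟩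
    ext p
    have := congrArg (fun f => ((f : P u.1 →ₗ[A] LinearMap.range h) p : P (pr u).1)) hg
    simpa using this
  exact core pr hprinv θ ι b hblock hθin tr htr1 htr0 hfacL hfacR x hx
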